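/- Let m, n ≥ 1 be integers and let c : Finset E → ℕ be a function on subsets of a finite set E of size m, satisfying: c(∅) ≥ 1, c(F) ≤ n for all F, and for every F ⊆ E there are at least n - c(F) elements e ∈ E \ F with c(F ∪ {e}) ≥ c(F) + 1, while c(F ∪ {e}) ≥ c(F) for every e. Then for all k ∈ ℕ: (1/m^k) ∑_{(e_1,...,e_k) ∈ E^k} (c({e_1,...,e_k}) - 1)/(n - 1) ≥ 1 - (1 - 1/m)^k, assuming n ≥ 2. -/

import Mathlib

open Finset Real

/-- Averaged class-counting bound (Theorem `dense`, first inequality):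
if `c : Finset E → ℕ` starts at least `1`, is bounded by `n`, is monotone under
insertion, and each `F` admits at least `n - c F` elements strictly increasing `c`,
then `(1/m^k) ∑_{(e₁,…,e_k) ∈ E^k} (c {e₁,…,e_k} - 1)/(n-1) ≥ 1 - (1 - 1/m)^k`. -/
theorem avg_class_count_bound {E : Type*} [Fintype E] [DecidableEq E]
    (m n : ℕ) (hm : 1 ≤ m) (hn : 2 ≤ n) (hE : Fintype.card E = m)
    (c : Finset E → ℕ)
    (hc1 : 1 ≤ c ∅)
    (hcn : ∀ F : Finset E, c F ≤ n)
    (hmono : ∀ (F : Finset E) (e : E), c F ≤ c (insert e F))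
    (hinc : ∀ F : Finset E,
      n - c F ≤ ((Finset.univ \ F).filter (fun e => c F + 1 ≤ c (insert e F))).card) :
    ∀ k : ℕ,
      (1 / (m : ℝ) ^ k) *
          ∑ t : Fin k → E, ((c (Finset.image t Finset.univ) : ℝ) - 1) / ((n : ℝ) - 1) ≥
        1 - (1 - 1 / (m : ℝ)) ^ k := by
  have hm0 : (0:ℝ) < m := by exact_mod_cast hm
  have hm0' : (m:ℝ) ≠ 0 := ne_of_gt hm0
  have hn1 : (0:ℝ) < (n:ℝ) - 1 := by
    have : (2:ℝ) ≤ n := by exact_mod_cast hn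
    linarith
  -- the per-set key inequality
  have key : ∀ F : Finset E, ((m:ℝ)-1) * ((c F : ℝ) - 1) + ((n:ℝ)-1)
      ≤ ∑ e : E, ((c (insert e F) : ℝ) - 1) := by
    intro F
    set A := (Finset.univ \ F).filter (fun e => c F + 1 ≤ c (insert e F)) with hAdef
    have hcard : ((n:ℝ) - c F) ≤ (A.card : ℝ) := by
      have := hinc F
      have h2 : ((n - c F : ℕ) : ℝ) ≤ (A.card : ℝ) := by exact_mod_cast this
      rwa [Nat.cast_sub (hcn F)] at h2
    have h1 : (A.card : ℝ) ≤ ∑ e : E, ((c (insert e F):ℝ) - c F) := by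
      have hsub : A ⊆ Finset.univ := Finset.subset_univ A
      calc (A.card : ℝ) = ∑ e ∈ A, (1:ℝ) := by simp
        _ ≤ ∑ e ∈ A, ((c (insert e F):ℝ) - c F) := by
            apply Finset.sum_le_sum
            intro e he
            have : c F + 1 ≤ c (insert e F) := (Finset.mem_filter.mp he).2
            have : ((c F : ℝ)) + 1 ≤ (c (insert e F) : ℝ) := by exact_mod_cast this
            linarith
        _ ≤ ∑ e : E, ((c (insert e F):ℝ) - c F) := by
            apply Finset.sum_le_sum_of_subset_of_nonneg hsub
            intro e _ _
            have := hmono F e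
            have : ((c F : ℝ)) ≤ (c (insert e F) : ℝ) := by exact_mod_cast this
            linarith
    have hsum : ∑ e : E, ((c (insert e F):ℝ) - c F)
        = (∑ e : E, ((c (insert e F):ℝ) - 1)) - (m:ℝ) * ((c F:ℝ) - 1) := by
      rw [Finset.sum_sub_distrib, Finset.sum_sub_distrib]
      simp [Finset.card_univ, hE]
      ring
    have := hcard.trans h1
    rw [hsum] at this
    linarith
  -- image of a cons
  have himg : ∀ (k : ℕ) (e : E) (t : Fin k → E),
      Finset.image (Fin.cons e t : Fin (k+1) → E) Finset.univ
        = insert e (Finset.image t Finset.univ) := by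
    intro k e t
    ext x
    simp only [Finset.mem_image, Finset.mem_univ, true_and, Finset.mem_insert]
    constructor
    · rintro ⟨i, rfl⟩
      refine Fin.cases ?_ ?_ i
      · left; simp
      · intro j; right; exact ⟨j, by simp⟩
    · rintro (rfl | ⟨j, rfl⟩)
      · exact ⟨0, by simp⟩
      · exact ⟨j.succ, by simp⟩
  -- splitting the sum over (k+1)-tuples
  have hsplit : ∀ (g : Finset E → ℝ) (k : ℕ),
      ∑ t : Fin (k+1) → E, g (Finset.image t Finset.univ)
        = ∑ t : Fin k → E, ∑ e : E, g (insert e (Finset.image t Finset.univ)) := by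
    intro g k
    have e1 : ∑ t : Fin (k+1) → E, g (Finset.image t Finset.univ)
        = ∑ p : E × (Fin k → E), g (insert p.1 (Finset.image p.2 Finset.univ)) := by
      refine (Fintype.sum_equiv (Fin.consEquiv (fun _ : Fin (k+1) => E))
        (fun p => g (insert p.1 (Finset.image p.2 Finset.univ)))
        (fun t => g (Finset.image t Finset.univ)) ?_).symm
      intro p
      show g (insert p.1 (Finset.image p.2 Finset.univ)) = g (Finset.image (Fin.cons p.1 p.2) Finset.univ)
      rw [himg]
    rw [e1, Fintype.sum_prod_type]
    exact Finset.sum_comm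
  -- main induction
  set q : ℝ := 1 - 1/(m:ℝ) with hq
  have main : ∀ k : ℕ, ((n:ℝ)-1) * (m:ℝ)^k * (1 - q^k)
      ≤ ∑ t : Fin k → E, ((c (Finset.image t Finset.univ):ℝ) - 1) := by
    intro k
    induction k with
    | zero =>
      simp only [pow_zero, sub_self, mul_zero]
      apply Finset.sum_nonneg
      intro t _
      have himg0 : Finset.image t Finset.univ = (∅ : Finset E) := by simp
      rw [himg0]
      have : (1:ℝ) ≤ c ∅ := by exact_mod_cast hc1
      linarith
    | succ k ih =>
      rw [hsplit (fun F => ((c F : ℝ) - 1)) k]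
      have step : ∑ t : Fin k → E, (((m:ℝ)-1) * ((c (Finset.image t Finset.univ) : ℝ) - 1) + ((n:ℝ)-1))
          ≤ ∑ t : Fin k → E, ∑ e : E, ((c (insert e (Finset.image t Finset.univ)):ℝ) - 1) :=
        Finset.sum_le_sum (fun t _ => key _)
      have hcardfun : (Fintype.card (Fin k → E) : ℝ) = (m:ℝ)^k := by
        rw [Fintype.card_fun]
        simp [hE, Fintype.card_fin]
      have lhs_eq : ∑ t : Fin k → E, (((m:ℝ)-1) * ((c (Finset.image t Finset.univ) : ℝ) - 1) + ((n:ℝ)-1))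
          = ((m:ℝ)-1) * (∑ t : Fin k → E, ((c (Finset.image t Finset.univ) : ℝ) - 1))
            + (m:ℝ)^k * ((n:ℝ)-1) := by
        rw [Finset.sum_add_distrib, ← Finset.mul_sum, Finset.sum_const, nsmul_eq_mul,
          Finset.card_univ, hcardfun]
      have hm1 : (0:ℝ) ≤ (m:ℝ) - 1 := by
        have : (1:ℝ) ≤ m := by exact_mod_cast hm
        linarith
      have hmq : (m:ℝ) * q = (m:ℝ) - 1 := by
        rw [hq, mul_sub, mul_one, mul_one_div_cancel hm0']
      have expand : ((n:ℝ)-1) * (m:ℝ)^(k+1) * (1 - q^(k+1))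
          = ((m:ℝ)-1) * (((n:ℝ)-1) * (m:ℝ)^k * (1 - q^k)) + (m:ℝ)^k * ((n:ℝ)-1) := by
        linear_combination (-((n:ℝ)-1)*(m:ℝ)^k*q^k) * hmq
      calc ((n:ℝ)-1) * (m:ℝ)^(k+1) * (1 - q^(k+1))
          = ((m:ℝ)-1) * (((n:ℝ)-1) * (m:ℝ)^k * (1 - q^k)) + (m:ℝ)^k * ((n:ℝ)-1) := expand
        _ ≤ ((m:ℝ)-1) * (∑ t : Fin k → E, ((c (Finset.image t Finset.univ) : ℝ) - 1))
            + (m:ℝ)^k * ((n:ℝ)-1) := by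
            have := mul_le_mul_of_nonneg_left ih hm1
            linarith
        _ = ∑ t : Fin k → E, (((m:ℝ)-1) * ((c (Finset.image t Finset.univ) : ℝ) - 1) + ((n:ℝ)-1)) := lhs_eq.symm
        _ ≤ _ := step
  -- conclude
  intro k
  have hmk : (0:ℝ) < (m:ℝ)^k := pow_pos hm0 k
  have h := main k
  rw [ge_iff_le]
  have hdiv : ∑ t : Fin k → E, ((c (Finset.image t Finset.univ) : ℝ) - 1) / ((n : ℝ) - 1)
      = (∑ t : Fin k → E, ((c (Finset.image t Finset.univ) : ℝ) - 1)) / ((n:ℝ)-1) := by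
    rw [Finset.sum_div]
  rw [hdiv]
  rw [one_div, ← div_eq_inv_mul, le_div_iff₀ hmk, le_div_iff₀ hn1]
  calc (1 - q^k) * (m:ℝ)^k * ((n:ℝ)-1)
      = ((n:ℝ)-1) * (m:ℝ)^k * (1 - q^k) := by ring
    _ ≤ _ := h
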